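/- Let p be a prime, k ∈ ℕ, and l ∈ ℕ with kp ≤ l < kp + p. Then there exists a vector (α_0, …, α_{p−1}) ∈ F_p^p such that the polynomial Σ_{i=0}^{p−1} α_i (Y + i)^{kp+p−1} in F_p[Y] equals Y^l + P(Y) for some polynomial P of degree strictly less than kp. -/

import Mathlib

open Polynomial

lemma sum_pow_zmod (p : ℕ) [Fact p.Prime] (e : ℕ) (he : e < 2 * (p - 1)) :
    ∑ x : ZMod p, x ^ e = if e = p - 1 then -1 else 0 := by
  have hp2 : 2 ≤ p := (Fact.out : p.Prime).two_le
  have hcard : Fintype.card (ZMod p) = p := ZMod.card p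
  rcases Nat.lt_trichotomy e (p - 1) with h | h | h
  · rw [if_neg (by omega)]
    have := FiniteField.sum_pow_lt_card_sub_one (ZMod p) e (by omega)
    simpa [hcard] using this
  · rw [if_pos h, h]
    have : ∀ x : ZMod p, x ^ (p - 1) = if x = 0 then 0 else 1 := by
      intro x
      by_cases hx : x = 0
      · simp [hx, zero_pow (by omega : p - 1 ≠ 0)]
      · simp [hx, ZMod.pow_card_sub_one_eq_one hx]
    rw [Finset.sum_congr rfl fun x _ => this x]
    have h1 : (∑ x : ZMod p, if x = 0 then (0 : ZMod p) else 1)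
        = ∑ x : ZMod p, ((1 : ZMod p) - if x = 0 then 1 else 0) := by
      refine Finset.sum_congr rfl fun x _ => ?_
      split_ifs <;> simp
    rw [h1, Finset.sum_sub_distrib, Finset.sum_const, Finset.sum_ite_eq' Finset.univ (0 : ZMod p)]
    simp [Finset.card_univ, hcard]
  · rw [if_neg (by omega)]
    set s := e - (p - 1) with hs
    have hs1 : 0 < s := by omega
    have hs2 : s < p - 1 := by omega
    have : ∀ x : ZMod p, x ^ e = x ^ s := by
      intro x
      by_cases hx : x = 0
      · simp [hx, zero_pow (by omega : e ≠ 0), zero_pow (by omega : s ≠ 0)]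
      · have : e = s + (p - 1) := by omega
        rw [this, pow_add, ZMod.pow_card_sub_one_eq_one hx, mul_one]
    rw [Finset.sum_congr rfl fun x _ => this x]
    have := FiniteField.sum_pow_lt_card_sub_one (ZMod p) s (by omega)
    simpa [hcard] using this

open Polynomial

lemma fin_sum_zmod (p : ℕ) [Fact p.Prime] (g : ZMod p → ZMod p) :
    ∑ i : Fin p, g ((i : ℕ) : ZMod p) = ∑ x : ZMod p, g x := by
  haveI : NeZero p := ⟨(Fact.out : p.Prime).pos.ne'⟩
  apply Fintype.sum_bijective (fun i : Fin p => ((i : ℕ) : ZMod p))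
  · rw [Fintype.bijective_iff_injective_and_card]
    refine ⟨fun a b hab => ?_, by simp [ZMod.card]⟩
    have := congrArg ZMod.val hab
    rwa [ZMod.val_cast_of_lt a.isLt, ZMod.val_cast_of_lt b.isLt, ← Fin.ext_iff] at this
  · intro x; rfl

lemma choose_ne_zero_zmod (p : ℕ) [Fact p.Prime] (k l : ℕ)
    (hl1 : k * p ≤ l) (hl2 : l < k * p + p) :
    ((Nat.choose (k * p + p - 1) l : ZMod p)) ≠ 0 := by
  have hp : p.Prime := Fact.out
  have hp2 : 2 ≤ p := hp.two_le
  rw [Ne, ZMod.natCast_eq_zero_iff]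
  intro hdvd
  set m := l - k * p with hm
  have hmlt : m ≤ p - 1 := by omega
  have hmod := (Choose.choose_modEq_choose_mod_mul_choose_div_nat
    (n := k * p + p - 1) (k := l) (p := p))
  have hn1 : (k * p + p - 1) % p = p - 1 := by
    have : k * p + p - 1 = (p - 1) + k * p := by omega
    rw [this, Nat.add_mul_mod_self_right, Nat.mod_eq_of_lt (by omega)]
  have hn2 : (k * p + p - 1) / p = k := by
    have : k * p + p - 1 = (p - 1) + k * p := by omega
    rw [this, Nat.add_mul_div_right _ _ hp.pos, Nat.div_eq_of_lt (by omega), zero_add]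
  have hl1' : l % p = m := by
    have : l = m + k * p := by omega
    rw [this, Nat.add_mul_mod_self_right, Nat.mod_eq_of_lt (by omega)]
  have hl2' : l / p = k := by
    have : l = m + k * p := by omega
    rw [this, Nat.add_mul_div_right _ _ hp.pos, Nat.div_eq_of_lt (by omega), zero_add]
  rw [hn1, hn2, hl1', hl2', Nat.choose_self, mul_one] at hmod
  have hdvd2 : p ∣ Nat.choose (p - 1) m := by
    have h0 : Nat.choose (k * p + p - 1) l ≡ 0 [MOD p] := (Nat.modEq_zero_iff_dvd).mpr hdvd
    exact (Nat.modEq_zero_iff_dvd).mp (hmod.symm.trans h0)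
  have hfact : Nat.choose (p - 1) m * m.factorial * (p - 1 - m).factorial
      = (p - 1).factorial := Nat.choose_mul_factorial_mul_factorial hmlt
  have : p ∣ (p - 1).factorial := hfact ▸ (hdvd2.mul_right _).mul_right _
  have := (Nat.Prime.dvd_factorial hp).mp this
  omega
theorem interpolation_lemma (p : ℕ) (hp : p.Prime) (k l : ℕ)
    (hl1 : k * p ≤ l) (hl2 : l < k * p + p) :
    ∃ α : Fin p → ZMod p, ∃ P : Polynomial (ZMod p),
      P.degree < (k * p : ℕ) ∧
      (∑ i : Fin p, C (α i) * (X + C ((i : ℕ) : ZMod p)) ^ (k * p + p - 1))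
        = X ^ l + P := by
  haveI : Fact p.Prime := ⟨hp⟩
  haveI : NeZero p := ⟨hp.pos.ne'⟩
  have hp2 : 2 ≤ p := hp.two_le
  by_cases hl : l = k * p + p - 1
  · refine ⟨fun i => if i = 0 then 1 else 0, 0, ?_, ?_⟩
    · rw [degree_zero]
      exact lt_of_lt_of_le (WithBot.bot_lt_coe 0) (by exact_mod_cast Nat.zero_le _)
    · rw [Finset.sum_eq_single (0 : Fin p)]
      · simp [hl]
      · intro b _ hb; simp [hb]
      · simp
  · have hln : l < k * p + p - 1 := by omega
    set c : ZMod p := (((k * p + p - 1).choose l : ZMod p))⁻¹ with hc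
    set α : Fin p → ZMod p := fun i => -c * ((i : ℕ) : ZMod p) ^ (l - k * p) with hα
    set S : Polynomial (ZMod p) :=
      ∑ i : Fin p, C (α i) * (X + C ((i : ℕ) : ZMod p)) ^ (k * p + p - 1) with hS
    refine ⟨α, S - X ^ l, ?_, by ring⟩
    rw [degree_lt_iff_coeff_zero]
    intro j hj
    rw [coeff_sub, sub_eq_zero]
    have hSco : S.coeff j = ∑ i : Fin p,
        α i * (((i : ℕ) : ZMod p) ^ (k * p + p - 1 - j) * ((k * p + p - 1).choose j : ZMod p)) := by
      rw [hS, finset_sum_coeff]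
      refine Finset.sum_congr rfl fun i _ => ?_
      rw [coeff_C_mul, coeff_X_add_C_pow]
    by_cases hjn : k * p + p - 1 < j
    · rw [hSco, Nat.choose_eq_zero_of_lt hjn]
      rw [coeff_X_pow, if_neg (by omega)]
      simp
    · push_neg at hjn
      set e : ℕ := (l - k * p) + (k * p + p - 1 - j) with he
      have hstep : S.coeff j = (-c * ((k * p + p - 1).choose j : ZMod p))
          * ∑ i : Fin p, ((i : ℕ) : ZMod p) ^ e := by
        rw [hSco, Finset.mul_sum]
        refine Finset.sum_congr rfl fun i _ => ?_
        rw [hα, he, pow_add]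
        ring
      rw [hstep, fin_sum_zmod p (fun x => x ^ e),
        sum_pow_zmod p e (by omega)]
      have hne := choose_ne_zero_zmod p k l hl1 hl2
      by_cases hjl : j = l
      · rw [if_pos (by omega), coeff_X_pow, if_pos hjl, hjl]
        rw [mul_neg_one, neg_mul, neg_neg, hc, inv_mul_cancel₀ hne]
      · rw [if_neg (by omega), coeff_X_pow, if_neg hjl, mul_zero]
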